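/- Let $t_0 > 0$, $\alpha > 1$, and let $h : [t_0,+\infty) \to \mathbb{R}$ be twice differentiable, continuously differentiable, and bounded below. Suppose $t\,\ddot{h}(t) + \alpha\,\dot{h}(t) \le g(t)$ for almost all $t \in [t_0,+\infty)$, where $g \ge 0$ and $g \in L^1([t_0,+\infty))$. Then $\lim_{t\to+\infty} h(t)$ exists (in $\mathbb{R}$). -/

import Mathlib

open MeasureTheory Filter
open Set ENNReal


lemma aux_measurable_rpow (p : ℝ) : Measurable fun x : ℝ => x ^ p :=
  measurable_of_continuousOn_compl_singleton 0 <|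
    continuousOn_of_forall_continuousAt fun x hx =>
      Real.continuousAt_rpow_const x p (Or.inl hx)

lemma aux_key (t₀ α T : ℝ) (ht₀ : 0 < t₀) (hα : 1 < α) (h' h'' g₁ : ℝ → ℝ)
    (hd2 : ∀ t ∈ Set.Ici t₀, HasDerivAt h' (h'' t) t)
    (hC1 : ContinuousOn h' (Set.Ici t₀))
    (hg₁ : ∀ t, t * h'' t + α * h' t ≤ g₁ t)
    (hφint : IntegrableOn (fun s => s ^ (α-1) * g₁ s) (Set.Icc t₀ T))
    (hT : t₀ ≤ T) :
    T ^ α * h' T - t₀ ^ α * h' t₀ ≤ ∫ s in Set.Ioc t₀ T, s ^ (α-1) * g₁ s := by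
  have key := intervalIntegral.sub_le_integral_of_hasDeriv_right_of_le (g := fun t => t ^ α * h' t)
    (g' := fun t => t ^ (α-1) * (t * h'' t + α * h' t)) (φ := fun s => s ^ (α-1) * g₁ s)
    hT ?_ ?_ hφint ?_
  · rwa [intervalIntegral.integral_of_le hT] at key
  · exact (continuousOn_id.rpow_const fun x hx =>
      Or.inl (ne_of_gt (lt_of_lt_of_le ht₀ hx.1))).mul (hC1.mono Icc_subset_Ici_self)
  · intro x hx
    have hx0 : (0:ℝ) < x := lt_trans ht₀ hx.1
    have d1 : HasDerivAt (fun t : ℝ => t ^ α) (α * x ^ (α - 1)) x :=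
      Real.hasDerivAt_rpow_const (Or.inl hx0.ne')
    have d2 := (d1.mul (hd2 x (le_of_lt hx.1)))
    have hxα : x ^ α = x ^ (α - 1) * x := by
      rw [← Real.rpow_add_one hx0.ne' (α - 1)]; ring_nf
    refine HasDerivAt.hasDerivWithinAt ?_
    convert d2 using 1
    · rfl
    · rfl
    rw [hxα]; ring
  · intro x hx
    have hx0 : (0:ℝ) < x := lt_trans ht₀ hx.1
    exact mul_le_mul_of_nonneg_left (hg₁ x) (Real.rpow_nonneg hx0.le _)

lemma aux_tonelli (t₀ α : ℝ) (ht₀ : 0 < t₀) (hα : 1 < α) (g₀ : ℝ → ℝ)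
    (hmeas : Measurable g₀) (hint : IntegrableOn g₀ (Set.Ici t₀)) :
    ∫⁻ T in Set.Ici t₀, ENNReal.ofReal (T ^ (-α)) *
      ∫⁻ s in Set.Ioc t₀ T, ENNReal.ofReal (s ^ (α-1) * g₀ s) ∂volume ∂volume < ⊤ := by
  set μ := volume.restrict (Set.Ici t₀) with hμ
  set K : ℝ → ℝ → ℝ≥0∞ := fun T s => ENNReal.ofReal (T ^ (-α)) *
      (Set.Ioc t₀ T).indicator (fun s => ENNReal.ofReal (s ^ (α-1) * g₀ s)) s with hK
  have hKmeas : Measurable (Function.uncurry K) := by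
    have h1 : Measurable fun p : ℝ × ℝ => ENNReal.ofReal (p.1 ^ (-α)) :=
      ((aux_measurable_rpow (-α)).comp measurable_fst).ennreal_ofReal
    have h2 : Measurable fun p : ℝ × ℝ =>
        ({p : ℝ × ℝ | p.2 ∈ Set.Ioc t₀ p.1}).indicator
          (fun p => ENNReal.ofReal (p.2 ^ (α-1) * g₀ p.2)) p := by
      refine Measurable.indicator ?_ ?_
      · exact (((aux_measurable_rpow (α-1)).comp measurable_snd).mul
          (hmeas.comp measurable_snd)).ennreal_ofReal
      · exact (measurableSet_lt measurable_const measurable_snd).inter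
          (measurableSet_le measurable_snd measurable_fst)
    have heq : Function.uncurry K = fun p : ℝ × ℝ => ENNReal.ofReal (p.1 ^ (-α)) *
        ({p : ℝ × ℝ | p.2 ∈ Set.Ioc t₀ p.1}).indicator
          (fun p => ENNReal.ofReal (p.2 ^ (α-1) * g₀ p.2)) p := by
      ext p
      by_cases hp : p.2 ∈ Set.Ioc t₀ p.1 <;>
        simp [Function.uncurry, K, Set.indicator_apply, hp]
    rw [heq]; exact h1.mul h2
  have step1 : ∀ T, (∫⁻ s in Set.Ioc t₀ T, ENNReal.ofReal (s ^ (α-1) * g₀ s) ∂volume)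
      = ∫⁻ s, (Set.Ioc t₀ T).indicator (fun s => ENNReal.ofReal (s ^ (α-1) * g₀ s)) s ∂μ := by
    intro T
    rw [lintegral_indicator measurableSet_Ioc _, hμ, Measure.restrict_restrict measurableSet_Ioc,
      Set.inter_eq_self_of_subset_left (Set.Ioc_subset_Ioi_self.trans Set.Ioi_subset_Ici_self)]
  have step2 : (∫⁻ T in Set.Ici t₀, ENNReal.ofReal (T ^ (-α)) *
      ∫⁻ s in Set.Ioc t₀ T, ENNReal.ofReal (s ^ (α-1) * g₀ s) ∂volume ∂volume)
      = ∫⁻ s, ∫⁻ T, K T s ∂μ ∂μ := by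
    rw [← lintegral_lintegral_swap hKmeas.aemeasurable]
    refine lintegral_congr fun T => ?_
    rw [step1 T, ← lintegral_const_mul' _ _ ENNReal.ofReal_ne_top]
  have hae : ∀ᵐ s ∂μ, s ∈ Set.Ioi t₀ := by
    rw [hμ, ← MeasureTheory.restrict_Ioi_eq_restrict_Ici]
    exact ae_restrict_mem measurableSet_Ioi
  have step3 : ∀ s ∈ Set.Ioi t₀, (∫⁻ T, K T s ∂μ) = ENNReal.ofReal ((α-1)⁻¹ * g₀ s) := by
    intro s hs
    have hs0 : (0:ℝ) < s := lt_trans ht₀ hs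
    have hind : ∀ T, K T s = (Set.Ici s).indicator
        (fun T => ENNReal.ofReal (T ^ (-α)) * ENNReal.ofReal (s ^ (α-1) * g₀ s)) T := by
      intro T
      by_cases hT : s ≤ T
      · have h1 : s ∈ Set.Ioc t₀ T := ⟨hs, hT⟩
        simp [K, Set.indicator_of_mem, h1, Set.mem_Ici.mpr hT]
      · have h1 : s ∉ Set.Ioc t₀ T := fun hc => hT hc.2
        have h2 : T ∉ Set.Ici s := hT
        simp [K, Set.indicator_of_notMem, h1, h2]
    have hR : (∫⁻ T in Set.Ici s, ENNReal.ofReal (T ^ (-α)) ∂volume)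
        = ENNReal.ofReal (s ^ (1-α) * (α-1)⁻¹) := by
      rw [← MeasureTheory.restrict_Ioi_eq_restrict_Ici]
      have hIoi : IntegrableOn (fun T : ℝ => T ^ (-α)) (Set.Ioi s) :=
        integrableOn_Ioi_rpow_of_lt (by linarith) hs0
      have hnn : 0 ≤ᵐ[volume.restrict (Set.Ioi s)] fun T : ℝ => T ^ (-α) := by
        filter_upwards [ae_restrict_mem measurableSet_Ioi] with T hT
        exact Real.rpow_nonneg (le_of_lt (hs0.trans hT)) _
      rw [← ofReal_integral_eq_lintegral_ofReal hIoi hnn,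
        integral_Ioi_rpow_of_lt (by linarith) hs0]
      congr 1
      rw [show (-α + 1 : ℝ) = 1 - α by ring, show ((1:ℝ) - α) = -(α-1) by ring,
        div_neg, neg_div, neg_neg, div_eq_mul_inv]
    calc ∫⁻ T, K T s ∂μ
        = ∫⁻ T in Set.Ici s, ENNReal.ofReal (T ^ (-α)) * ENNReal.ofReal (s ^ (α-1) * g₀ s) ∂μ := by
          simp_rw [hind]; rw [lintegral_indicator measurableSet_Ici _]
      _ = ∫⁻ T in Set.Ici s, ENNReal.ofReal (T ^ (-α)) * ENNReal.ofReal (s ^ (α-1) * g₀ s) ∂volume := by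
          rw [hμ, Measure.restrict_restrict measurableSet_Ici,
            Set.inter_eq_self_of_subset_left (Set.Ici_subset_Ici.mpr hs.le)]
      _ = (∫⁻ T in Set.Ici s, ENNReal.ofReal (T ^ (-α)) ∂volume) * ENNReal.ofReal (s ^ (α-1) * g₀ s) :=
          lintegral_mul_const' _ _ ENNReal.ofReal_ne_top
      _ = ENNReal.ofReal (s ^ (1-α) * (α-1)⁻¹) * ENNReal.ofReal (s ^ (α-1) * g₀ s) := by rw [hR]
      _ = ENNReal.ofReal ((s ^ (1-α) * (α-1)⁻¹) * (s ^ (α-1) * g₀ s)) := by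
          rw [← ENNReal.ofReal_mul (mul_nonneg (Real.rpow_nonneg hs0.le _)
            (inv_nonneg.mpr (by linarith)))]
      _ = ENNReal.ofReal ((α-1)⁻¹ * g₀ s) := by
          congr 1
          have h1 : s ^ ((1:ℝ)-α) * s ^ (α-1) = 1 := by
            rw [← Real.rpow_add hs0]; norm_num
          calc (s^((1:ℝ)-α) * (α-1)⁻¹) * (s^(α-1) * g₀ s)
              = (s^((1:ℝ)-α) * s^(α-1)) * ((α-1)⁻¹ * g₀ s) := by ring
            _ = (α-1)⁻¹ * g₀ s := by rw [h1]; ring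
  have step4 : (∫⁻ s, ∫⁻ T, K T s ∂μ ∂μ) = ∫⁻ s, ENNReal.ofReal ((α-1)⁻¹ * g₀ s) ∂μ := by
    refine lintegral_congr_ae ?_
    filter_upwards [hae] with s hs
    exact step3 s hs
  rw [step2, step4]
  have hint2 : Integrable (fun s => (α-1)⁻¹ * g₀ s) μ := hint.const_mul _
  calc ∫⁻ s, ENNReal.ofReal ((α-1)⁻¹ * g₀ s) ∂μ
      ≤ ∫⁻ s, ‖(α-1)⁻¹ * g₀ s‖₊ ∂μ := lintegral_mono fun s => Real.ofReal_le_enorm _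
    _ < ⊤ := hint2.2
theorem stmt_16 (t₀ α : ℝ) (ht₀ : 0 < t₀) (hα : 1 < α)
    (h h' h'' g : ℝ → ℝ)
    (hd1 : ∀ t ∈ Set.Ici t₀, HasDerivAt h (h' t) t)
    (hd2 : ∀ t ∈ Set.Ici t₀, HasDerivAt h' (h'' t) t)
    (hC1 : ContinuousOn h' (Set.Ici t₀))
    (hbelow : ∃ m : ℝ, ∀ t ∈ Set.Ici t₀, m ≤ h t)
    (hg0 : ∀ᵐ t ∂(volume.restrict (Set.Ici t₀)), 0 ≤ g t)
    (hgint : IntegrableOn g (Set.Ici t₀))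
    (hineq : ∀ᵐ t ∂(volume.restrict (Set.Ici t₀)),
      t * h'' t + α * h' t ≤ g t) :
    ∃ L : ℝ, Tendsto h atTop (nhds L) := by
  obtain ⟨m, hm⟩ := hbelow
  set μ := volume.restrict (Set.Ici t₀) with hμ
  set g₁ : ℝ → ℝ := fun t => max (g t) (t * h'' t + α * h' t) with hg₁def
  have hg₁le : ∀ t, t * h'' t + α * h' t ≤ g₁ t := fun t => le_max_right _ _
  have hgg₁ : g =ᵐ[μ] g₁ := by
    filter_upwards [hineq] with t ht
    simp [hg₁def, max_eq_left ht]
  have hg₁int : IntegrableOn g₁ (Set.Ici t₀) := hgint.congr hgg₁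
  have hg₁0 : ∀ᵐ t ∂μ, 0 ≤ g₁ t := by
    filter_upwards [hg0] with t ht; exact ht.trans (le_max_left _ _)
  have hα1 : (0:ℝ) ≤ α - 1 := by linarith
  have hφint : ∀ T, t₀ ≤ T → IntegrableOn (fun s => s ^ (α-1) * g₁ s) (Set.Icc t₀ T) := by
    intro T hT
    have h1 : IntegrableOn g₁ (Set.Icc t₀ T) := hg₁int.mono_set Set.Icc_subset_Ici_self
    refine Integrable.bdd_mul (c := T ^ (α-1)) h1
      ((aux_measurable_rpow (α-1)).aestronglyMeasurable) ?_
    filter_upwards [ae_restrict_mem measurableSet_Icc] with s hs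
    rw [Real.norm_eq_abs, abs_of_nonneg (Real.rpow_nonneg (le_trans ht₀.le hs.1) _)]
    exact Real.rpow_le_rpow (le_trans ht₀.le hs.1) hs.2 hα1
  set C := t₀ ^ α * h' t₀ with hC
  set G : ℝ → ℝ := fun T => ∫ s in Set.Ioc t₀ T, s ^ (α-1) * g₁ s with hG
  have hsubIoc : ∀ T : ℝ, Set.Ioc t₀ T ⊆ Set.Ici t₀ :=
    fun T => Set.Ioc_subset_Ioi_self.trans Set.Ioi_subset_Ici_self
  have hG0 : ∀ T, t₀ ≤ T → 0 ≤ G T := by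
    intro T hT
    refine integral_nonneg_of_ae ?_
    filter_upwards [ae_restrict_of_ae_restrict_of_subset (hsubIoc T) hg₁0,
      ae_restrict_mem measurableSet_Ioc] with s h1 h2
    exact mul_nonneg (Real.rpow_nonneg (le_of_lt (lt_trans ht₀ h2.1)) _) h1
  have hkey : ∀ T ∈ Set.Ici t₀, h' T ≤ (C + G T) * T ^ (-α) := by
    intro T hT
    have hk := aux_key t₀ α T ht₀ hα h' h'' g₁ hd2 hC1 hg₁le (hφint T hT) hT
    have hTpos : (0:ℝ) < T := lt_of_lt_of_le ht₀ hT
    have hTα : (0:ℝ) < T ^ α := Real.rpow_pos_of_pos hTpos _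
    have h2 : T ^ α * h' T ≤ C + G T := by simp only [hC, hG]; linarith [hk]
    rw [Real.rpow_neg hTpos.le, ← div_eq_mul_inv, le_div_iff₀ hTα]
    linarith [h2, mul_comm (h' T) (T ^ α)]
  set P : ℝ → ℝ := fun t => max (h' t) 0 with hP
  have hPsm : AEStronglyMeasurable P μ :=
    (hC1.sup continuousOn_const).aestronglyMeasurable measurableSet_Ici
  have hPnonneg : ∀ t, 0 ≤ P t := fun t => le_max_right _ _
  have hh'P : ∀ t, h' t ≤ P t := fun t => le_max_left _ _
  have hg₁aem : AEMeasurable g₁ μ := hg₁int.aestronglyMeasurable.aemeasurable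
  set g₀ := hg₁aem.mk g₁ with hg₀def
  have hg₀meas : Measurable g₀ := hg₁aem.measurable_mk
  have hg₁g₀ : g₁ =ᵐ[μ] g₀ := hg₁aem.ae_eq_mk
  have hg₀int : IntegrableOn g₀ (Set.Ici t₀) := hg₁int.congr hg₁g₀
  set L : ℝ → ℝ≥0∞ :=
    fun T => ∫⁻ s in Set.Ioc t₀ T, ENNReal.ofReal (s ^ (α-1) * g₀ s) ∂volume with hL
  have hGL : ∀ T, t₀ ≤ T → ENNReal.ofReal (G T) = L T := by
    intro T hT
    have hnn : 0 ≤ᵐ[volume.restrict (Set.Ioc t₀ T)] fun s => s ^ (α-1) * g₁ s := by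
      filter_upwards [ae_restrict_of_ae_restrict_of_subset (hsubIoc T) hg₁0,
        ae_restrict_mem measurableSet_Ioc] with s h1 h2
      exact mul_nonneg (Real.rpow_nonneg (le_of_lt (lt_trans ht₀ h2.1)) _) h1
    simp only [hG, hL]
    rw [ofReal_integral_eq_lintegral_ofReal ((hφint T hT).mono_set Set.Ioc_subset_Icc_self) hnn]
    refine lintegral_congr_ae ?_
    filter_upwards [ae_restrict_of_ae_restrict_of_subset (hsubIoc T) hg₁g₀] with s hs
    rw [hs]
  have hfin1 : (∫⁻ T, ENNReal.ofReal (|C| * T ^ (-α)) ∂μ) < ⊤ := by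
    have hint : IntegrableOn (fun T : ℝ => |C| * T ^ (-α)) (Set.Ici t₀) := by
      rw [IntegrableOn, ← MeasureTheory.restrict_Ioi_eq_restrict_Ici]
      exact (integrableOn_Ioi_rpow_of_lt (by linarith) ht₀).const_mul _
    calc ∫⁻ T, ENNReal.ofReal (|C| * T ^ (-α)) ∂μ
        ≤ ∫⁻ T, ‖|C| * T ^ (-α)‖₊ ∂μ := lintegral_mono fun T => Real.ofReal_le_enorm _
      _ < ⊤ := hint.2
  have hfin2 := aux_tonelli t₀ α ht₀ hα g₀ hg₀meas hg₀int
  have hPfin : HasFiniteIntegral P μ := by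
    have hbound : ∀ᵐ T ∂μ, ENNReal.ofReal (P T) ≤
        ENNReal.ofReal (|C| * T ^ (-α)) + ENNReal.ofReal (T ^ (-α)) * L T := by
      filter_upwards [ae_restrict_mem measurableSet_Ici] with T hT
      have hTpos : (0:ℝ) < T := lt_of_lt_of_le ht₀ hT
      have hα0 : (0:ℝ) ≤ T ^ (-α) := Real.rpow_nonneg hTpos.le _
      have h1 : P T ≤ |C| * T ^ (-α) + T ^ (-α) * G T := by
        have h2 := hkey T hT
        have h3 : (C + G T) * T ^ (-α) ≤ (|C| + G T) * T ^ (-α) :=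
          mul_le_mul_of_nonneg_right (by linarith [le_abs_self C]) hα0
        have h4 : (0:ℝ) ≤ (|C| + G T) * T ^ (-α) :=
          mul_nonneg (add_nonneg (abs_nonneg _) (hG0 T hT)) hα0
        have h5 : P T ≤ (|C| + G T) * T ^ (-α) := max_le (h2.trans h3) h4
        have h6 : (|C| + G T) * T ^ (-α) = |C| * T ^ (-α) + T ^ (-α) * G T := by ring
        linarith
      calc ENNReal.ofReal (P T) ≤ ENNReal.ofReal (|C| * T ^ (-α) + T ^ (-α) * G T) :=
            ENNReal.ofReal_le_ofReal h1
        _ = ENNReal.ofReal (|C| * T ^ (-α)) + ENNReal.ofReal (T ^ (-α) * G T) :=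
            ENNReal.ofReal_add (mul_nonneg (abs_nonneg _) hα0) (mul_nonneg hα0 (hG0 T hT))
        _ = ENNReal.ofReal (|C| * T ^ (-α)) + ENNReal.ofReal (T ^ (-α)) * ENNReal.ofReal (G T) := by
            rw [ENNReal.ofReal_mul hα0]
        _ = _ := by rw [hGL T hT]
    rw [hasFiniteIntegral_iff_norm]
    have hle : (∫⁻ T, ENNReal.ofReal ‖P T‖ ∂μ) ≤
        ∫⁻ T, (ENNReal.ofReal (|C| * T ^ (-α)) + ENNReal.ofReal (T ^ (-α)) * L T) ∂μ := by
      refine lintegral_mono_ae ?_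
      filter_upwards [hbound] with T hT
      rwa [Real.norm_eq_abs, abs_of_nonneg (hPnonneg T)]
    refine lt_of_le_of_lt hle ?_
    rw [lintegral_add_left (((aux_measurable_rpow (-α)).const_mul |C|).ennreal_ofReal)]
    exact ENNReal.add_lt_top.mpr ⟨hfin1, hfin2⟩
  have hPint : IntegrableOn P (Set.Ici t₀) := ⟨hPsm, hPfin⟩
  have hIIh' : ∀ a b : ℝ, t₀ ≤ a → a ≤ b → IntervalIntegrable h' volume a b := by
    intro a b ha hab
    apply ContinuousOn.intervalIntegrable
    apply hC1.mono
    rw [Set.uIcc_of_le hab]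
    exact fun x hx => le_trans ha hx.1
  have hIIP : ∀ a b : ℝ, t₀ ≤ a → a ≤ b → IntervalIntegrable P volume a b := by
    intro a b ha hab
    apply MeasureTheory.IntegrableOn.intervalIntegrable
    apply hPint.mono_set
    rw [Set.uIcc_of_le hab]
    exact fun x hx => le_trans ha hx.1
  have hFTC : ∀ a b : ℝ, t₀ ≤ a → a ≤ b → h b - h a = ∫ t in a..b, h' t := by
    intro a b ha hab
    refine (intervalIntegral.integral_eq_sub_of_hasDerivAt ?_ (hIIh' a b ha hab)).symm
    intro t ht
    rw [Set.uIcc_of_le hab] at ht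
    exact hd1 t (le_trans ha ht.1)
  have hdiff : ∀ a b : ℝ, t₀ ≤ a → a ≤ b → h b - h a ≤ ∫ t in a..b, P t := by
    intro a b ha hab
    rw [hFTC a b ha hab]
    exact intervalIntegral.integral_mono_on hab (hIIh' a b ha hab) (hIIP a b ha hab)
      (fun x _ => hh'P x)
  set A : ℝ → ℝ := fun t => ∫ s in t₀..t, P s with hA
  set S₀ : ℝ := ∫ s in Set.Ici t₀, P s with hS₀
  have hAdd : ∀ a b : ℝ, t₀ ≤ a → a ≤ b → A b = A a + ∫ t in a..b, P t := by
    intro a b ha hab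
    simp only [hA]
    exact (intervalIntegral.integral_add_adjacent_intervals (hIIP t₀ a le_rfl ha)
      (hIIP a b ha hab)).symm
  have hAmono : ∀ a b : ℝ, t₀ ≤ a → a ≤ b → A a ≤ A b := by
    intro a b ha hab
    rw [hAdd a b ha hab]
    have h1 : 0 ≤ ∫ t in a..b, P t := intervalIntegral.integral_nonneg hab fun u _ => hPnonneg u
    linarith
  have hAle : ∀ t, t₀ ≤ t → A t ≤ S₀ := by
    intro t ht
    simp only [hA, hS₀]
    rw [intervalIntegral.integral_of_le ht]
    refine setIntegral_mono_set hPint ?_ ?_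
    · exact Filter.Eventually.of_forall hPnonneg
    · exact HasSubset.Subset.eventuallyLE (hsubIoc t)
  have hq_anti : ∀ a b : ℝ, t₀ ≤ a → a ≤ b → h b - A b ≤ h a - A a := by
    intro a b ha hab
    have h1 := hdiff a b ha hab
    have h2 := hAdd a b ha hab
    linarith
  set Q : ℝ → ℝ := fun t => h (max t t₀) - A (max t t₀) with hQ
  set B : ℝ → ℝ := fun t => A (max t t₀) with hB
  have hQanti : Antitone Q := fun x y hxy =>
    hq_anti _ _ (le_max_right _ _) (max_le_max hxy le_rfl)
  have hBmono : Monotone B := fun x y hxy =>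
    hAmono _ _ (le_max_right _ _) (max_le_max hxy le_rfl)
  have hQbdd : BddBelow (Set.range Q) := by
    refine ⟨m - S₀, ?_⟩
    rintro _ ⟨t, rfl⟩
    have h1 := hm _ (le_max_right t t₀)
    have h2 := hAle _ (le_max_right t t₀)
    simp only [hQ]
    linarith
  have hBbdd : BddAbove (Set.range B) := by
    refine ⟨S₀, ?_⟩
    rintro _ ⟨t, rfl⟩
    exact hAle _ (le_max_right t t₀)
  have tQ := tendsto_atTop_ciInf hQanti hQbdd
  have tB := tendsto_atTop_ciSup hBmono hBbdd
  refine ⟨_, Tendsto.congr' ?_ (tQ.add tB)⟩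
  filter_upwards [eventually_ge_atTop t₀] with t ht
  simp [hQ, hB, max_eq_left ht]
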